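/- For any real z ≥ 2 and any positive integer N, writing R(N) = N/φ(N) and R_z(N) = ∏_{p | N, p ≤ z} (1 − 1/p)⁻¹, one has ∑_{N ≤ x} (R(N) − R_z(N)) ≪ x/z for all x ≥ 2, with an absolute implied constant. -/

import Mathlib

open Finset

lemma expand_aux (s : Finset ℕ) (f : ℕ → ℝ) :
    ∏ p ∈ s, (f p + 1) = ∑ t ∈ s.powerset, ∏ p ∈ t, f p := by
  rw [Finset.prod_add]; simp

lemma prod_le_exp (s : Finset ℕ) (f : ℕ → ℝ) (hf : ∀ i ∈ s, 0 ≤ f i) :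
    ∏ i ∈ s, (f i + 1) ≤ Real.exp (∑ i ∈ s, f i) := by
  rw [Real.exp_sum]
  refine Finset.prod_le_prod (fun i hi => by linarith [hf i hi]) (fun i hi => ?_)
  linarith [Real.add_one_le_exp (f i)]

lemma exp_le_one_add (S : ℝ) (h0 : 0 ≤ S) (h1 : S ≤ 1) : Real.exp S ≤ 1 + 2*S := by
  have h := Real.exp_bound (x := S) (by rw [abs_of_nonneg h0]; exact h1) (n := 1) (by norm_num)
  simp only [Finset.range_one, Finset.sum_singleton, pow_zero, pow_one, Nat.factorial_one,
    Nat.cast_one, Nat.cast_ofNat] at h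
  norm_num at h
  have h2 := abs_sub_le_iff.mp h
  rw [abs_of_nonneg h0] at h2
  linarith [h2.1]

lemma one_sub_inv (p : ℕ) (hp : 2 ≤ p) :
    (1 - 1/(p:ℝ))⁻¹ = 1/((p:ℝ)-1) + 1 := by
  have h2 : (2:ℝ) ≤ p := by exact_mod_cast hp
  have h0 : (p:ℝ) ≠ 0 := by linarith
  have h1 : (p:ℝ) - 1 ≠ 0 := by linarith
  rw [one_sub_div h0, inv_div]
  field_simp
  ring

lemma real_totient_prod (N : ℕ) (hN : 0 < N) :
    (N:ℝ)/(Nat.totient N : ℝ) = ∏ p ∈ N.primeFactors, (1 - 1/(p:ℝ))⁻¹ := by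
  have h := Nat.totient_eq_mul_prod_factors N
  have h' : (Nat.totient N : ℝ) = (N:ℝ) * ∏ p ∈ N.primeFactors, (1 - 1/(p:ℝ)) := by
    have := congrArg (Rat.cast : ℚ → ℝ) h
    push_cast at this
    simpa [one_div] using this
  have hpos : ∀ p ∈ N.primeFactors, (0:ℝ) < 1 - 1/(p:ℝ) := by
    intro p hp
    have h2 : 2 ≤ p := (Nat.prime_of_mem_primeFactors hp).two_le
    have h2' : (2:ℝ) ≤ p := by exact_mod_cast h2
    have : 1/(p:ℝ) ≤ 1/2 := by
      apply one_div_le_one_div_of_le <;> linarith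
    linarith
  have hprodpos : (0:ℝ) < ∏ p ∈ N.primeFactors, (1 - 1/(p:ℝ)) :=
    Finset.prod_pos hpos
  have hN' : (N:ℝ) ≠ 0 := Nat.cast_ne_zero.mpr hN.ne'
  rw [h', Finset.prod_inv_distrib, mul_comm, ← div_div, div_right_comm, div_self hN',
    one_div]

lemma keyN (K N : ℕ) (hN : 0 < N) :
    (N:ℝ)/(Nat.totient N : ℝ)
      - ∏ p ∈ N.primeFactors.filter (fun p => p ≤ K), (1 - 1/(p:ℝ))⁻¹
    = ∑ t ∈ N.primeFactors.powerset \ (N.primeFactors.filter (fun p => p ≤ K)).powerset,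
        ∏ p ∈ t, 1/((p:ℝ)-1) := by
  have hsub : (N.primeFactors.filter (fun p => p ≤ K)) ⊆ N.primeFactors := filter_subset _ _
  rw [real_totient_prod N hN,
    Finset.prod_congr rfl (fun p hp => one_sub_inv p (Nat.prime_of_mem_primeFactors hp).two_le),
    Finset.prod_congr rfl
      (fun p hp => one_sub_inv p (Nat.prime_of_mem_primeFactors (hsub hp)).two_le),
    expand_aux, expand_aux,
    Finset.sum_sdiff_eq_sub (Finset.powerset_mono.mpr hsub)]

lemma tail_sum' (K : ℕ) (hK : 1 ≤ K) :
    ∀ M, ∑ n ∈ Finset.Icc (K+1) M, (1/((n:ℝ)*((n:ℝ)-1)))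
      ≤ 1/(K:ℝ) - 1/((max M K : ℕ):ℝ) := by
  intro M
  induction M with
  | zero => simp [Finset.Icc_eq_empty (by omega : ¬ K + 1 ≤ 0), max_eq_right (Nat.zero_le K)]
  | succ M ih =>
    by_cases h : K + 1 ≤ M + 1
    · have hM : K ≤ M := by omega
      have h1 : (1:ℝ) ≤ (M:ℝ) := by exact_mod_cast (le_trans hK hM)
      rw [Finset.sum_Icc_succ_top h, max_eq_left (le_trans hM (Nat.le_succ M))]
      rw [max_eq_left hM] at ih
      have key : (1/(((M:ℝ)+1)*(((M:ℝ)+1)-1))) = 1/(M:ℝ) - 1/((M:ℝ)+1) := by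
        field_simp
        ring
        exact mul_inv_cancel₀ (by linarith)
      push_cast
      rw [key]
      linarith
    · rw [Finset.Icc_eq_empty (by omega)]
      rw [max_eq_right (by omega : M + 1 ≤ K)]
      simp

lemma tail_sum (K M : ℕ) (hK : 1 ≤ K) :
    ∑ n ∈ Finset.Icc (K+1) M, (1/((n:ℝ)*((n:ℝ)-1))) ≤ 1/(K:ℝ) := by
  have := tail_sum' K hK M
  have h2 : (0:ℝ) ≤ 1/((max M K : ℕ):ℝ) := by positivity
  linarith

/-- The truncation `R_z(N) = ∏_{p ∣ N, p ≤ z} (1 - 1/p)⁻¹`. -/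
noncomputable def Rz (z : ℝ) (N : ℕ) : ℝ :=
  ∏ p ∈ N.primeFactors.filter (fun p => p ≤ ⌊z⌋₊), (1 - 1/(p:ℝ))⁻¹

theorem stmt_5 :
    ∃ C : ℝ, ∀ z x : ℝ, 2 ≤ z → 2 ≤ x →
      ∑ N ∈ Finset.Icc 1 ⌊x⌋₊, ((N:ℝ)/(Nat.totient N : ℝ) - Rz z N)
        ≤ C * x / z := by
  refine ⟨12, fun z x hz hx => ?_⟩
  simp only [Rz]
  set K := ⌊z⌋₊ with hKdef
  set M := ⌊x⌋₊ with hMdef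
  have hK2 : 2 ≤ K := Nat.le_floor (by exact_mod_cast hz)
  have hK1 : 1 ≤ K := le_trans one_le_two hK2
  have hKpos : (0:ℝ) < K := by
    have : (2:ℝ) ≤ K := by exact_mod_cast hK2
    linarith
  have hzpos : (0:ℝ) < z := lt_of_lt_of_le two_pos hz
  have hxpos : (0:ℝ) < x := lt_of_lt_of_le two_pos hx
  have hMx : (M:ℝ) ≤ x := Nat.floor_le (le_of_lt hxpos)
  have hzK : z / 2 ≤ (K:ℝ) := by
    have h1 : z < (K:ℝ) + 1 := Nat.lt_floor_add_one z
    linarith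
  have hKz : 1/(K:ℝ) ≤ 2/z := by
    rw [div_le_div_iff₀ hKpos hzpos]
    linarith
  set T := (Finset.range (M+1)).filter Nat.Prime with hT
  set TS := T.filter (fun p => p ≤ K) with hTS
  set 𝒯 := T.powerset \ TS.powerset with h𝒯
  have hTprime : ∀ p ∈ T, Nat.Prime p := fun p hp => (mem_filter.mp hp).2
  have hw : ∀ t ∈ 𝒯, (0:ℝ) ≤ ∏ p ∈ t, 1/((p:ℝ)-1) := by
    intro t ht
    have htT : t ⊆ T := mem_powerset.mp (mem_sdiff.mp ht).1
    refine Finset.prod_nonneg (fun p hp => ?_)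
    have h2 : 2 ≤ p := (hTprime p (htT hp)).two_le
    have h2' : (2:ℝ) ≤ p := by exact_mod_cast h2
    have : (0:ℝ) < (p:ℝ) - 1 := by linarith
    positivity
  have hdpos : ∀ t ∈ 𝒯, 0 < ∏ p ∈ t, p := by
    intro t ht
    have htT : t ⊆ T := mem_powerset.mp (mem_sdiff.mp ht).1
    exact Finset.prod_pos (fun p hp => (hTprime p (htT hp)).pos)
  calc ∑ N ∈ Finset.Icc 1 M,
        ((N:ℝ)/(Nat.totient N : ℝ)
          - ∏ p ∈ N.primeFactors.filter (fun p => p ≤ K), (1 - 1/(p:ℝ))⁻¹)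
      = ∑ N ∈ Finset.Icc 1 M,
          ∑ t ∈ N.primeFactors.powerset \ (N.primeFactors.filter (fun p => p ≤ K)).powerset,
            ∏ p ∈ t, 1/((p:ℝ)-1) := by
        refine Finset.sum_congr rfl (fun N hN => ?_)
        exact keyN K N (mem_Icc.mp hN).1
    _ ≤ ∑ N ∈ Finset.Icc 1 M,
          ∑ t ∈ 𝒯.filter (fun t => (∏ p ∈ t, p) ∣ N), ∏ p ∈ t, 1/((p:ℝ)-1) := by
        refine Finset.sum_le_sum (fun N hN => ?_)
        have hN1 : 1 ≤ N := (mem_Icc.mp hN).1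
        have hNM : N ≤ M := (mem_Icc.mp hN).2
        refine Finset.sum_le_sum_of_subset_of_nonneg ?_ ?_
        · intro t ht
          rw [mem_sdiff, mem_powerset, mem_powerset] at ht
          obtain ⟨ht1, ht2⟩ := ht
          have htT : t ⊆ T := by
            intro p hp
            rw [hT, mem_filter, mem_range]
            have hpN := ht1 hp
            refine ⟨?_, Nat.prime_of_mem_primeFactors hpN⟩
            have := Nat.le_of_dvd (by omega) (Nat.dvd_of_mem_primeFactors hpN)
            omega
          rw [mem_filter, h𝒯, mem_sdiff, mem_powerset, mem_powerset]
          refine ⟨⟨htT, ?_⟩, ?_⟩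
          · intro hts
            apply ht2
            intro p hp
            rw [mem_filter]
            exact ⟨ht1 hp, (mem_filter.mp (hts hp)).2⟩
          · exact Finset.prod_primes_dvd N
              (fun p hp => (Nat.prime_of_mem_primeFactors (ht1 hp)).prime)
              (fun p hp => Nat.dvd_of_mem_primeFactors (ht1 hp))
        · intro t ht _
          exact hw t (mem_filter.mp ht).1
    _ = ∑ t ∈ 𝒯, (∏ p ∈ t, 1/((p:ℝ)-1))
          * (((Finset.Icc 1 M).filter (fun N => (∏ p ∈ t, p) ∣ N)).card : ℝ) := by
        have hstep : ∀ N, ∑ t ∈ 𝒯.filter (fun t => (∏ p ∈ t, p) ∣ N), ∏ p ∈ t, 1/((p:ℝ)-1)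
            = ∑ t ∈ 𝒯, if (∏ p ∈ t, p) ∣ N then ∏ p ∈ t, 1/((p:ℝ)-1) else 0 :=
          fun N => Finset.sum_filter _ _
        rw [Finset.sum_congr rfl (fun N _ => hstep N), Finset.sum_comm]
        refine Finset.sum_congr rfl (fun t ht => ?_)
        rw [← Finset.sum_filter, Finset.sum_const, nsmul_eq_mul, mul_comm]
    _ ≤ ∑ t ∈ 𝒯, (∏ p ∈ t, 1/((p:ℝ)-1)) * (x / ((∏ p ∈ t, p : ℕ) : ℝ)) := by
        refine Finset.sum_le_sum (fun t ht => ?_)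
        refine mul_le_mul_of_nonneg_left ?_ (hw t ht)
        have hIcc : Finset.Icc 1 M = Finset.Ioc 0 M := by
          ext a
          simp only [Finset.mem_Icc, Finset.mem_Ioc]
          omega
        have hcard : ((Finset.Icc 1 M).filter (fun N => (∏ p ∈ t, p) ∣ N)).card
            = M / (∏ p ∈ t, p) := by
          rw [hIcc]
          exact Nat.Ioc_filter_dvd_card_eq_div M _
        rw [hcard]
        have hd := hdpos t ht
        have hd' : (0:ℝ) < ((∏ p ∈ t, p : ℕ) : ℝ) := by exact_mod_cast hd
        calc ((M / (∏ p ∈ t, p) : ℕ) : ℝ) ≤ (M:ℝ) / ((∏ p ∈ t, p : ℕ) : ℝ) := Nat.cast_div_le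
          _ ≤ x / ((∏ p ∈ t, p : ℕ) : ℝ) := by gcongr
    _ = x * ∑ t ∈ 𝒯, ∏ p ∈ t, (1/((p:ℝ)*((p:ℝ)-1))) := by
        rw [Finset.mul_sum]
        refine Finset.sum_congr rfl (fun t ht => ?_)
        have hsplit : ∏ p ∈ t, (1/((p:ℝ)*((p:ℝ)-1)))
            = (∏ p ∈ t, 1/((p:ℝ)-1)) * ∏ p ∈ t, ((p:ℝ))⁻¹ := by
          rw [← Finset.prod_mul_distrib]
          refine Finset.prod_congr rfl (fun p hp => ?_)
          rw [one_div, mul_inv, one_div]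
          ring
        rw [hsplit, Finset.prod_inv_distrib, Nat.cast_prod, div_eq_mul_inv]
        ring
    _ ≤ 12 * x / z := by
        set TB := T.filter (fun p => ¬ p ≤ K) with hTB
        have hTB_sub : TB ⊆ Finset.Icc (K+1) M := by
          intro p hp
          rw [hTB, mem_filter, hT, mem_filter, mem_range] at hp
          rw [mem_Icc]
          omega
        have hTS_sub : TS ⊆ Finset.Icc 2 M := by
          intro p hp
          rw [hTS, mem_filter, hT, mem_filter, mem_range] at hp
          rw [mem_Icc]
          have := hp.1.2.two_le
          omega
        have hεnn : ∀ n : ℕ, 2 ≤ n → (0:ℝ) ≤ 1/((n:ℝ)*((n:ℝ)-1)) := by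
          intro n hn
          have h2 : (2:ℝ) ≤ n := by exact_mod_cast hn
          have h3 : (0:ℝ) < (n:ℝ) - 1 := by linarith
          positivity
        have hSTS : ∑ p ∈ TS, (1/((p:ℝ)*((p:ℝ)-1))) ≤ 1 := by
          calc ∑ p ∈ TS, (1/((p:ℝ)*((p:ℝ)-1)))
              ≤ ∑ n ∈ Finset.Icc 2 M, (1/((n:ℝ)*((n:ℝ)-1))) :=
                Finset.sum_le_sum_of_subset_of_nonneg hTS_sub
                  (fun n hn _ => hεnn n (mem_Icc.mp hn).1)
            _ ≤ 1/((1:ℕ):ℝ) := tail_sum 1 M le_rfl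
            _ = 1 := by norm_num
        have hSTB : ∑ p ∈ TB, (1/((p:ℝ)*((p:ℝ)-1))) ≤ 1/(K:ℝ) := by
          calc ∑ p ∈ TB, (1/((p:ℝ)*((p:ℝ)-1)))
              ≤ ∑ n ∈ Finset.Icc (K+1) M, (1/((n:ℝ)*((n:ℝ)-1))) :=
                Finset.sum_le_sum_of_subset_of_nonneg hTB_sub
                  (fun n hn _ => hεnn n (by have := (mem_Icc.mp hn).1; omega))
            _ ≤ 1/(K:ℝ) := tail_sum K M hK1
        have hSTBnn : (0:ℝ) ≤ ∑ p ∈ TB, (1/((p:ℝ)*((p:ℝ)-1))) :=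
          Finset.sum_nonneg (fun p hp => hεnn p (hTprime p (mem_filter.mp hp).1).two_le)
        have hSTSnn : (0:ℝ) ≤ ∑ p ∈ TS, (1/((p:ℝ)*((p:ℝ)-1))) :=
          Finset.sum_nonneg (fun p hp => hεnn p (hTprime p (mem_filter.mp hp).1).two_le)
        have hK2' : (2:ℝ) ≤ (K:ℝ) := by exact_mod_cast hK2
        have hinvK : 1/(K:ℝ) ≤ 1 := by
          rw [div_le_one hKpos]; linarith
        have hsum : ∑ t ∈ 𝒯, ∏ p ∈ t, (1/((p:ℝ)*((p:ℝ)-1)))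
            = (∏ p ∈ TS, ((1/((p:ℝ)*((p:ℝ)-1))) + 1))
              * ((∏ p ∈ TB, ((1/((p:ℝ)*((p:ℝ)-1))) + 1)) - 1) := by
          rw [h𝒯, Finset.sum_sdiff_eq_sub (Finset.powerset_mono.mpr (filter_subset _ _)),
            ← expand_aux, ← expand_aux,
            ← Finset.prod_filter_mul_prod_filter_not T (fun p => p ≤ K)]
          ring
        have hPTSnn : (0:ℝ) ≤ ∏ p ∈ TS, ((1/((p:ℝ)*((p:ℝ)-1))) + 1) :=
          Finset.prod_nonneg (fun p hp => by
            have := hεnn p (hTprime p (mem_filter.mp hp).1).two_le; linarith)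
        have hPTS : ∏ p ∈ TS, ((1/((p:ℝ)*((p:ℝ)-1))) + 1) ≤ 3 := by
          calc ∏ p ∈ TS, ((1/((p:ℝ)*((p:ℝ)-1))) + 1)
              ≤ Real.exp (∑ p ∈ TS, (1/((p:ℝ)*((p:ℝ)-1)))) :=
                prod_le_exp _ _ (fun p hp => hεnn p (hTprime p (mem_filter.mp hp).1).two_le)
            _ ≤ Real.exp 1 := Real.exp_le_exp.mpr hSTS
            _ ≤ 3 := by linarith [Real.exp_one_lt_d9]
        have hPTBge : (1:ℝ) ≤ ∏ p ∈ TB, ((1/((p:ℝ)*((p:ℝ)-1))) + 1) := by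
          calc (1:ℝ) = ∏ _p ∈ TB, (1:ℝ) := (Finset.prod_const_one).symm
            _ ≤ _ := Finset.prod_le_prod (by norm_num) (fun p hp => by
                have := hεnn p (hTprime p (mem_filter.mp hp).1).two_le; linarith)
        have hPTB : ∏ p ∈ TB, ((1/((p:ℝ)*((p:ℝ)-1))) + 1) - 1 ≤ 2 * (2/z) := by
          have hexp : ∏ p ∈ TB, ((1/((p:ℝ)*((p:ℝ)-1))) + 1)
              ≤ Real.exp (∑ p ∈ TB, (1/((p:ℝ)*((p:ℝ)-1)))) :=
            prod_le_exp _ _ (fun p hp => hεnn p (hTprime p (mem_filter.mp hp).1).two_le)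
          have hb := exp_le_one_add _ hSTBnn (le_trans hSTB hinvK)
          have : ∑ p ∈ TB, (1/((p:ℝ)*((p:ℝ)-1))) ≤ 2/z := le_trans hSTB hKz
          linarith
        rw [hsum]
        have hfac : (∏ p ∈ TS, ((1/((p:ℝ)*((p:ℝ)-1))) + 1))
            * ((∏ p ∈ TB, ((1/((p:ℝ)*((p:ℝ)-1))) + 1)) - 1) ≤ 3 * (2 * (2/z)) :=
          mul_le_mul hPTS hPTB (by linarith) (by norm_num)
        calc x * ((∏ p ∈ TS, ((1/((p:ℝ)*((p:ℝ)-1))) + 1))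
              * ((∏ p ∈ TB, ((1/((p:ℝ)*((p:ℝ)-1))) + 1)) - 1))
            ≤ x * (3 * (2 * (2/z))) := by
              exact mul_le_mul_of_nonneg_left hfac (le_of_lt hxpos)
          _ = 12 * x / z := by ring
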